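/- The map f : CH^n → C^n, f(z) = z / sqrt(1 - ||z||^2), satisfies f^*(ω_FS) = ω_0, where ω_FS = (i/2) ∂∂̄ log(1 + Σ_j |z_j|^2) is the restriction of the Fubini–Study form to the affine chart C^n ⊂ CP^n, and ω_0 is the standard symplectic form restricted to CH^n. -/

import Mathlib

open scoped InnerProductSpace
set_option maxHeartbeats 4000000
set_option synthInstance.maxHeartbeats 400000

/-- The Kähler 2-form `(i/2)∂∂̄Φ` associated to a potential `Φ`, evaluated at the
point `z` on tangent vectors `v, w`. -/
noncomputable def kform (n : ℕ) (Φ : EuclideanSpace ℂ (Fin n) → ℝ)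
    (z v w : EuclideanSpace ℂ (Fin n)) : ℝ :=
  (1 / 4) * (fderiv ℝ (fderiv ℝ Φ) z (Complex.I • v) w
    - fderiv ℝ (fderiv ℝ Φ) z v (Complex.I • w))

namespace Stmt2Aux

variable {n : ℕ}

noncomputable abbrev P (n : ℕ) :
    EuclideanSpace ℂ (Fin n) →L[ℝ] (EuclideanSpace ℂ (Fin n) →L[ℝ] ℝ) :=
  2 • (innerSL ℝ)

lemma iSL (x y : EuclideanSpace ℂ (Fin n)) :
    (innerSL ℝ : EuclideanSpace ℂ (Fin n) →L[ℝ] (EuclideanSpace ℂ (Fin n) →L[ℝ] ℝ)) x y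
      = ⟪x, y⟫_ℝ := rfl

lemma rre (x y : EuclideanSpace ℂ (Fin n)) : ⟪x, y⟫_ℝ = (⟪x, y⟫_ℂ).re := by
  rw [PiLp.inner_apply, PiLp.inner_apply, Complex.re_sum]; rfl

lemma rIl (x y : EuclideanSpace ℂ (Fin n)) :
    ⟪Complex.I • x, y⟫_ℝ = -⟪x, Complex.I • y⟫_ℝ := by
  rw [rre, rre, inner_smul_left, inner_smul_right]; simp [Complex.ext_iff]

lemma rIz (x : EuclideanSpace ℂ (Fin n)) : ⟪x, Complex.I • x⟫_ℝ = 0 := by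
  rw [rre, inner_smul_right]
  have := inner_self_im (𝕜 := ℂ) x
  simp [Complex.ext_iff] at this ⊢
  simp [this]

lemma Papp (z v : EuclideanSpace ℂ (Fin n)) : P n z v = 2 * ⟪z, v⟫_ℝ := by
  show (2 • (innerSL ℝ z)) v = _
  rw [ContinuousLinearMap.smul_apply]
  simp [two_smul]; ring

lemma fd0 : fderiv ℝ (fun y : EuclideanSpace ℂ (Fin n) => ‖y‖ ^ 2) = fun y => P n y := by
  funext y
  exact (hasStrictFDerivAt_norm_sq y).hasFDerivAt.fderiv

lemma fd00 (z : EuclideanSpace ℂ (Fin n)) :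
    fderiv ℝ (fderiv ℝ (fun y : EuclideanSpace ℂ (Fin n) => ‖y‖ ^ 2)) z = P n := by
  rw [fd0]
  exact (P n).hasFDerivAt.fderiv

lemma fdlog : fderiv ℝ (fun y : EuclideanSpace ℂ (Fin n) => Real.log (1 + ‖y‖ ^ 2))
    = fun y => (1 + ‖y‖ ^ 2)⁻¹ • (P n y) := by
  funext y
  have h1 : HasFDerivAt (fun y : EuclideanSpace ℂ (Fin n) => 1 + ‖y‖ ^ 2) (P n y) y :=
    (hasStrictFDerivAt_norm_sq y).hasFDerivAt.const_add 1
  have hpos : (0:ℝ) < 1 + ‖y‖ ^ 2 := by positivity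
  exact (h1.log hpos.ne').fderiv

lemma fdlog2 (z : EuclideanSpace ℂ (Fin n)) :
    fderiv ℝ (fderiv ℝ (fun y : EuclideanSpace ℂ (Fin n) => Real.log (1 + ‖y‖ ^ 2))) z
    = (1 + ‖z‖ ^ 2)⁻¹ • (P n)
      + (-((1 + ‖z‖ ^ 2) ^ 2)⁻¹ • (P n z)).smulRight (P n z) := by
  rw [fdlog]
  have h1 : HasFDerivAt (fun y : EuclideanSpace ℂ (Fin n) => 1 + ‖y‖ ^ 2) (P n z) z :=
    (hasStrictFDerivAt_norm_sq z).hasFDerivAt.const_add 1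
  have hpos : (0:ℝ) < 1 + ‖z‖ ^ 2 := by positivity
  have hc : HasFDerivAt (fun y : EuclideanSpace ℂ (Fin n) => (1 + ‖y‖ ^ 2)⁻¹)
      (-((1 + ‖z‖ ^ 2) ^ 2)⁻¹ • (P n z)) z := by
    have := (hasDerivAt_inv hpos.ne').comp_hasFDerivAt z h1
    exact this
  have hf : HasFDerivAt (fun y : EuclideanSpace ℂ (Fin n) => P n y) (P n) z :=
    (P n).hasFDerivAt
  exact (hc.smul hf).fderiv

end Stmt2Aux

open Stmt2Aux

/-- The map `f : ℂHⁿ → ℂⁿ`, `f z = z / √(1 - ‖z‖²)`, satisfies `f^*(ω_FS) = ω₀`,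
where `ω_FS` has potential `log(1 + ‖w‖²)` and `ω₀` has potential `‖z‖²`. -/
theorem stmt_2 (n : ℕ)
    (f : EuclideanSpace ℂ (Fin n) → EuclideanSpace ℂ (Fin n))
    (hf : ∀ z, f z = (Real.sqrt (1 - ‖z‖ ^ 2))⁻¹ • z) :
    ∀ z : EuclideanSpace ℂ (Fin n), ‖z‖ < 1 → ∀ v w,
      kform n (fun y => Real.log (1 + ‖y‖ ^ 2)) (f z) (fderiv ℝ f z v) (fderiv ℝ f z w)
        = kform n (fun y => ‖y‖ ^ 2) z v w := by
  have hfe : f = fun y => (Real.sqrt (1 - ‖y‖ ^ 2))⁻¹ • y := funext hf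
  subst hfe
  intro z hz v w
  beta_reduce
  have hs1 : ‖z‖ ^ 2 < 1 := by nlinarith [norm_nonneg z]
  have hu : (0:ℝ) < 1 - ‖z‖ ^ 2 := by linarith
  set su : ℝ := Real.sqrt (1 - ‖z‖ ^ 2) with hsu_def
  have hsu : 0 < su := Real.sqrt_pos.2 hu
  have hsu2 : su ^ 2 = 1 - ‖z‖ ^ 2 := Real.sq_sqrt hu.le
  -- derivative of f
  have h1 : HasFDerivAt (fun y : EuclideanSpace ℂ (Fin n) => 1 - ‖y‖ ^ 2) (-(P n z)) z :=
    (hasStrictFDerivAt_norm_sq z).hasFDerivAt.const_sub 1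
  have h2 : HasFDerivAt (fun y : EuclideanSpace ℂ (Fin n) => Real.sqrt (1 - ‖y‖ ^ 2))
      ((1 / (2 * su)) • (-(P n z))) z := h1.sqrt hu.ne'
  have h3 : HasFDerivAt (fun y : EuclideanSpace ℂ (Fin n) => (Real.sqrt (1 - ‖y‖ ^ 2))⁻¹)
      ((-(su ^ 2)⁻¹) • ((1 / (2 * su)) • (-(P n z)))) z := by
    have := (hasDerivAt_inv (x := su) hsu.ne').comp_hasFDerivAt z h2
    simpa [Function.comp_def] using this
  have hF : HasFDerivAt (fun y : EuclideanSpace ℂ (Fin n) => (Real.sqrt (1 - ‖y‖ ^ 2))⁻¹ • y)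
      (su⁻¹ • ContinuousLinearMap.id ℝ (EuclideanSpace ℂ (Fin n))
        + ((-(su ^ 2)⁻¹) • ((1 / (2 * su)) • (-(P n z)))).smulRight z) z := by
    exact h3.smul (hasFDerivAt_id z)
  have hdf := hF.fderiv
  have happ : ∀ x : EuclideanSpace ℂ (Fin n),
      fderiv ℝ (fun y : EuclideanSpace ℂ (Fin n) => (Real.sqrt (1 - ‖y‖ ^ 2))⁻¹ • y) z x
      = su⁻¹ • x + ((su ^ 3)⁻¹ * ⟪z, x⟫_ℝ) • z := by
    intro x
    rw [hdf]
    simp only [ContinuousLinearMap.add_apply, ContinuousLinearMap.smul_apply,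
      ContinuousLinearMap.coe_id', id_eq, ContinuousLinearMap.smulRight_apply,
      ContinuousLinearMap.neg_apply, Papp, smul_eq_mul]
    erw [iSL]
    congr 1
    congr 1
    field_simp
    ring
  rw [kform, kform, fd00, fdlog2, happ v, happ w]
  -- abbreviations for scalars
  have hIV : Complex.I • (su⁻¹ • v + ((su ^ 3)⁻¹ * ⟪z, v⟫_ℝ) • z)
      = su⁻¹ • (Complex.I • v) + ((su ^ 3)⁻¹ * ⟪z, v⟫_ℝ) • (Complex.I • z) := by
    rw [smul_add, smul_comm Complex.I (su⁻¹), smul_comm Complex.I ((su ^ 3)⁻¹ * ⟪z, v⟫_ℝ)]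
  have hIW : Complex.I • (su⁻¹ • w + ((su ^ 3)⁻¹ * ⟪z, w⟫_ℝ) • z)
      = su⁻¹ • (Complex.I • w) + ((su ^ 3)⁻¹ * ⟪z, w⟫_ℝ) • (Complex.I • z) := by
    rw [smul_add, smul_comm Complex.I (su⁻¹), smul_comm Complex.I ((su ^ 3)⁻¹ * ⟪z, w⟫_ℝ)]
  have hw0n : ‖su⁻¹ • z‖ ^ 2 = (su ^ 2)⁻¹ * ‖z‖ ^ 2 := by
    rw [norm_smul, Real.norm_eq_abs, abs_of_pos (by positivity : (0:ℝ) < su⁻¹)]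
    ring
  -- ground rewrites for inner products
  have e1 : ⟪Complex.I • v, z⟫_ℝ = ⟪z, Complex.I • v⟫_ℝ := real_inner_comm _ _
  have e2 : ⟪Complex.I • z, w⟫_ℝ = -⟪z, Complex.I • w⟫_ℝ := rIl z w
  have e3 : ⟪Complex.I • z, z⟫_ℝ = -⟪z, Complex.I • z⟫_ℝ := rIl z z
  have e4 : ⟪v, Complex.I • w⟫_ℝ = -⟪Complex.I • v, w⟫_ℝ := by rw [rIl v w]; ring
  have e5 : ⟪v, Complex.I • z⟫_ℝ = -⟪z, Complex.I • v⟫_ℝ := by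
    rw [real_inner_comm, rIl z v]
  have e6 : ⟪z, Complex.I • z⟫_ℝ = 0 := rIz z
  simp only [ContinuousLinearMap.add_apply, ContinuousLinearMap.smul_apply,
    ContinuousLinearMap.smulRight_apply, ContinuousLinearMap.neg_apply,
    nsmul_eq_mul, Nat.cast_ofNat, smul_eq_mul,
    hIV, hIW, inner_add_left, inner_add_right, real_inner_smul_left, real_inner_smul_right,
    e1, e2, e3, e4, e5, e6, hw0n, real_inner_self_eq_norm_sq]
  erw [iSL, iSL, iSL, iSL, iSL, iSL, iSL, iSL]
  simp only [ContinuousLinearMap.add_apply, ContinuousLinearMap.smul_apply,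
    ContinuousLinearMap.smulRight_apply, ContinuousLinearMap.neg_apply,
    nsmul_eq_mul, Nat.cast_ofNat, smul_eq_mul,
    hIV, hIW, inner_add_left, inner_add_right, real_inner_smul_left, real_inner_smul_right,
    e1, e2, e3, e4, e5, e6, hw0n, real_inner_self_eq_norm_sq]
  have hz2 : ‖z‖ ^ 2 = 1 - su ^ 2 := by linarith
  rw [hz2]
  field_simp
  ring
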